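/- Let R be an algebraic curvature tensor on V = H ⊕ H⊥ with: (i) H totally geodesic symmetry in the sense that R(X,Y,V,X') = 0 whenever X,Y,X' ∈ H and V ∈ H⊥ (curvature with three tangent and one normal entry vanishes), (ii) mixed curvatures vanish: R(X,U)U' = 0 for X ∈ H, U,U' ∈ H⊥, and (iii) R(X,Y)U = 2R(X,U)Y for X,Y ∈ H, U ∈ H⊥. Then for all X,Y ∈ H and U,V ∈ H⊥: k(X+U, Y+V) = k_Σ(X,Y) + k_F(U,V) - 3R(X,Y,U,V), where k(A,B) = R(A,B,B,A), k_Σ is k restricted to H, and k_F is k restricted to H⊥. -/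
import Mathlib


/-- Walschap's formula: `k(X+U, Y+V) = k_Σ(X,Y) + k_F(U,V) - 3 R(X,Y,U,V)` at the soul. -/
theorem stmt_12 {V : Type*} [NormedAddCommGroup V] [InnerProductSpace ℝ V]
    (H : Submodule ℝ V)
    (R : V →ₗ[ℝ] V →ₗ[ℝ] V →ₗ[ℝ] V →ₗ[ℝ] ℝ)
    (hanti1 : ∀ A B C D : V, R A B C D = - R B A C D)
    (hanti2 : ∀ A B C D : V, R A B C D = - R A B D C)
    (hpair : ∀ A B C D : V, R A B C D = R C D A B)
    (htg : ∀ X ∈ H, ∀ Y ∈ H, ∀ X' ∈ H, ∀ U ∈ Hᗮ, R X Y U X' = 0)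
    (hmix : ∀ X ∈ H, ∀ U ∈ Hᗮ, ∀ U' ∈ Hᗮ, ∀ D : V, R X U U' D = 0)
    (hcross : ∀ X ∈ H, ∀ Y ∈ H, ∀ U ∈ Hᗮ, ∀ D : V, R X Y U D = 2 * R X U Y D) :
    ∀ X ∈ H, ∀ Y ∈ H, ∀ U ∈ Hᗮ, ∀ W ∈ Hᗮ,
      R (X + U) (Y + W) (Y + W) (X + U) =
        R X Y Y X + R U W W U - 3 * R X Y U W := by
  intro X hX Y hY U hU W hW
  have hexp : R (X + U) (Y + W) (Y + W) (X + U) =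
      R X Y Y X + R X Y Y U + R X Y W X + R X Y W U +
      R X W Y X + R X W Y U + R X W W X + R X W W U +
      R U Y Y X + R U Y Y U + R U Y W X + R U Y W U +
      R U W Y X + R U W Y U + R U W W X + R U W W U := by
    simp only [map_add, LinearMap.add_apply]; ring
  have e2 : R X Y Y U = 0 := by
    rw [hanti2, htg X hX Y hY Y hY U hU]; ring
  have e3 : R X Y W X = 0 := htg X hX Y hY X hX W hW
  have e4 : R X Y W U = - R X Y U W := by rw [hanti2 X Y W U]
  have e5 : R X W Y X = 0 := by
    rw [hpair, hanti2, htg Y hY X hX X hX W hW]; ring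
  have e6 : R X W Y U = -(1/2) * R X Y U W := by
    have h := hcross X hX Y hY W hW U
    rw [e4] at h; linarith
  have e7 : R X W W X = 0 := hmix X hX W hW W hW X
  have e8 : R X W W U = 0 := hmix X hX W hW W hW U
  have e9 : R U Y Y X = 0 := by rw [hpair]; exact htg Y hY X hX Y hY U hU
  have e10 : R U Y Y U = 0 := by
    rw [hanti1, hanti2, hmix Y hY U hU U hU Y]; ring
  have e11 : R U Y W X = -(1/2) * R X Y U W := by
    have h := hcross Y hY X hX U hU W
    have h2 : R Y X U W = - R X Y U W := by rw [hanti1 Y X U W]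
    have h3 : R U Y W X = R Y U X W := by rw [hanti1 U Y W X, hanti2 Y U W X]; ring
    rw [h3]; linarith
  have e12 : R U Y W U = 0 := by
    rw [hanti1, hmix Y hY U hU W hW U]; ring
  have e13 : R U W Y X = - R X Y U W := by
    rw [hpair, hanti1 Y X U W]
  have e14 : R U W Y U = 0 := by rw [hpair]; exact hmix Y hY U hU U hU W
  have e15 : R U W W X = 0 := by
    rw [hpair, hanti1, hmix X hX W hW U hU W]; ring
  rw [hexp, e2, e3, e4, e5, e6, e7, e8, e9, e10, e11, e12, e13, e14, e15]
  ring
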